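/- Let G be a connected k-regular finite simple graph with n vertices and m edges, where k ≥ 2. Then the characteristic polynomial of the positive support U⁺ of the Grover transition matrix satisfies, for every complex number λ, det(λ·I_{2m} − U⁺) = (λ² − 1)^{m−n} · det(λ²·I_n − λ·A(G) + (k−1)·I_n). Equivalently, U⁺ has 2n eigenvalues of the form λ = λ_A/2 ± i√(k − 1 − λ_A²/4) with λ_A an eigenvalue of A(G), and the remaining 2(m−n) eigenvalues are ±1 with equal multiplicities. -/

import Mathlib

open Matrix SimpleGraph

variable {V : Type*} [Fintype V] [DecidableEq V]

/-- The Grover transition matrix `U` of a graph `G`, indexed by darts (arcs):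
`U e f = 2/deg(t(f)) - 1` if `f = e⁻¹`, `U e f = 2/deg(t(f))` if `t(f) = o(e)` and
`f ≠ e⁻¹`, and `0` otherwise.  (When `t(f) = o(e)` we have `deg (t f) = deg (o e)`.) -/
noncomputable def grover (G : SimpleGraph V) [DecidableRel G.Adj] :
    Matrix G.Dart G.Dart ℝ := fun e f =>
  if f = e.symm then 2 / (G.degree e.toProd.1) - 1
  else if f.toProd.2 = e.toProd.1 then 2 / (G.degree e.toProd.1) else 0

/-- The positive support of a real square matrix. -/
noncomputable def posSupp {α : Type*} (M : Matrix α α ℝ) : Matrix α α ℝ :=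
  fun i j => if 0 < M i j then 1 else 0

/-- The matrix `B` with `B e f = 1` iff `t(e) = o(f)`. -/
def Bmat (G : SimpleGraph V) [DecidableRel G.Adj] : Matrix G.Dart G.Dart ℝ :=
  fun e f => if e.toProd.2 = f.toProd.1 then 1 else 0

/-- The arc-inversion matrix `J₀` with `(J₀) e f = 1` iff `f = e⁻¹`. -/
def J0 (G : SimpleGraph V) [DecidableRel G.Adj] : Matrix G.Dart G.Dart ℝ :=
  fun e f => if f = e.symm then 1 else 0

/-- The diagonal degree matrix of `G`. -/
noncomputable def degMat (G : SimpleGraph V) [DecidableRel G.Adj] : Matrix V V ℝ :=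
  Matrix.diagonal fun v => (G.degree v : ℝ)

set_option linter.unusedSectionVars false

section Aux

variable (G : SimpleGraph V) [DecidableRel G.Adj]

/-- start matrix over ℂ -/
def Kc : Matrix V G.Dart ℂ := fun v e => if e.toProd.1 = v then 1 else 0
/-- end matrix over ℂ -/
def Lc : Matrix V G.Dart ℂ := fun v e => if e.toProd.2 = v then 1 else 0
/-- arc reversal over ℂ -/
def Jc : Matrix G.Dart G.Dart ℂ := fun e f => if f = e.symm then 1 else 0
/-- nonbacktracking feed matrix over ℂ -/
def Bc : Matrix G.Dart G.Dart ℂ := fun e f => if e.toProd.2 = f.toProd.1 then 1 else 0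

lemma Jc_transpose : (Jc G)ᵀ = Jc G := by
  ext e f
  simp only [transpose_apply, Jc]
  congr 1
  simp only [eq_iff_iff]
  constructor
  · rintro rfl; simp
  · rintro rfl; simp

lemma Jc_mul_Jc : Jc G * Jc G = 1 := by
  ext e g
  simp only [mul_apply, Jc]
  rw [Finset.sum_eq_single e.symm]
  · simp [Matrix.one_apply, eq_comm]
  · intro f _ hf
    rw [if_neg (by simpa [eq_comm] using hf)]
    simp
  · simp

lemma LcT_mul_Kc : (Lc G)ᵀ * Kc G = Bc G := by
  ext e f
  simp only [mul_apply, transpose_apply, Lc, Kc, Bc]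
  rw [Finset.sum_eq_single e.toProd.2]
  · simp [eq_comm]
  · intro v _ hv
    rw [if_neg (fun h => hv h.symm), zero_mul]
  · simp

lemma Kc_mul_Jc : Kc G * Jc G = Lc G := by
  ext v f
  simp only [mul_apply, Kc, Jc, Lc]
  rw [Finset.sum_eq_single f.symm]
  · simp [eq_comm]
  · intro e _ he
    have hne : f ≠ e.symm := fun h => he (by rw [h]; simp)
    rw [if_neg hne, mul_zero]
  · simp

lemma Kc_mul_LcT : Kc G * (Lc G)ᵀ = G.adjMatrix ℂ := by
  ext v w
  simp only [mul_apply, Kc, Lc, transpose_apply, adjMatrix_apply]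
  by_cases h : G.Adj v w
  · rw [Finset.sum_eq_single (⟨(v, w), h⟩ : G.Dart)]
    · simp [h]
    · intro e _ he
      rcases eq_or_ne e.toProd.1 v with h1 | h1
      · rcases eq_or_ne e.toProd.2 w with h2 | h2
        · exact absurd (SimpleGraph.Dart.ext _ _ (Prod.ext h1 h2)) he
        · simp [h2]
      · simp [h1]
    · simp
  · rw [if_neg h]
    apply Finset.sum_eq_zero
    intro e _
    rcases eq_or_ne e.toProd.1 v with h1 | h1
    · rcases eq_or_ne e.toProd.2 w with h2 | h2
      · exact absurd (h1 ▸ h2 ▸ e.adj) h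
      · simp [h2]
    · simp [h1]

lemma Lc_mul_LcT {k : ℕ} (hreg : G.IsRegularOfDegree k) :
    Lc G * (Lc G)ᵀ = (k : ℂ) • 1 := by
  ext v w
  simp only [mul_apply, Lc, transpose_apply, Matrix.smul_apply, Matrix.one_apply, smul_eq_mul]
  rcases eq_or_ne v w with rfl | hvw
  · rw [if_pos rfl, mul_one]
    have : ∀ e : G.Dart, (if e.toProd.2 = v then (1:ℂ) else 0) * (if e.toProd.2 = v then (1:ℂ) else 0)
        = if e.toProd.2 = v then 1 else 0 := by
      intro e; split_ifs <;> simp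
    rw [Finset.sum_congr rfl fun e _ => this e]
    rw [Finset.sum_boole]
    have hcard : ({d : G.Dart | d.toProd.2 = v} : Finset _).card = G.degree v := by
      have := G.dart_fst_fiber_card_eq_degree v
      -- relate snd fiber to fst fiber via symm involution
      rw [← this]
      apply Finset.card_bij (fun d _ => d.symm)
      · intro a ha
        simp only [Finset.mem_filter, Finset.mem_univ, true_and] at ha ⊢
        simpa using ha
      · intro a _ b _ h
        simpa using congrArg SimpleGraph.Dart.symm h
      · intro b hb
        refine ⟨b.symm, ?_, by simp⟩
        simp only [Finset.mem_filter, Finset.mem_univ, true_and] at hb ⊢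
        simpa using hb
    rw [hcard, hreg v]
  · rw [if_neg hvw, mul_zero]
    apply Finset.sum_eq_zero
    intro e _
    split_ifs with h1 h2
    · exact absurd (h1.symm.trans h2) hvw
    · simp
    · simp
    · simp

end Aux

section DetJ

variable (G : SimpleGraph V) [DecidableRel G.Adj]

lemma det_smul_one_add_smul_Jc (lam c : ℂ) :
    Matrix.det (lam • (1 : Matrix G.Dart G.Dart ℂ) + c • Jc G) =
      (lam ^ 2 - c ^ 2) ^ G.edgeFinset.card := by
  classical
  letI : LinearOrder V := LinearOrder.lift' (Fintype.equivFin V) (Fintype.equivFin V).injective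
  set E := {e : Sym2 V // e ∈ G.edgeFinset} with hE
  let φ : G.Dart → Bool × E := fun d =>
    (decide (d.toProd.1 < d.toProd.2), ⟨d.edge, by simp [SimpleGraph.mem_edgeFinset]⟩)
  have hbit : ∀ d : G.Dart, decide (d.symm.toProd.1 < d.symm.toProd.2)
      = !decide (d.toProd.1 < d.toProd.2) := by
    intro d
    have hne : d.toProd.1 ≠ d.toProd.2 := d.adj.ne
    rcases lt_or_gt_of_ne hne with h | h
    · simp [h, not_lt_of_gt h, asymm h]
    · simp [h, not_lt_of_gt h, asymm h]
  have hφsymm : ∀ d : G.Dart, φ d.symm = (!(φ d).1, (φ d).2) := by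
    intro d
    ext
    · exact hbit d
    · simp [φ]
  have hinj : Function.Injective φ := by
    intro d1 d2 h
    have hedge : d1.edge = d2.edge := congrArg (fun p => (p.2 : Sym2 V)) h
    rcases (dart_edge_eq_iff d1 d2).mp hedge with rfl | rfl
    · rfl
    · exfalso
      have h1 : (φ d2.symm).1 = (φ d2).1 := congrArg Prod.fst h
      rw [hφsymm d2] at h1
      simp at h1
  have hsurj : Function.Surjective φ := by
    rintro ⟨b, e, he⟩
    have he' : e ∈ G.edgeSet := by rwa [SimpleGraph.mem_edgeFinset] at he
    revert he he'
    refine Sym2.ind (fun u v => ?_) e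
    intro he he'
    have hadj : G.Adj u v := he'
    let d0 : G.Dart := ⟨(u, v), hadj⟩
    by_cases hb : b = decide (u < v)
    · exact ⟨d0, by simp [φ, hb, d0]⟩
    · refine ⟨d0.symm, ?_⟩
      have : φ d0.symm = (!(φ d0).1, (φ d0).2) := hφsymm d0
      rw [this]
      have hb' : b = !decide (u < v) := by
        cases b <;> cases hdec : decide (u < v) <;> simp_all [hdec]
      ext
      · simp [φ, hb', d0]
      · simp [φ, d0]
  let ψ : G.Dart ≃ Bool × E := Equiv.ofBijective φ ⟨hinj, hsurj⟩
  let MB : Matrix Bool Bool ℂ := Matrix.of fun b b' : Bool => if b = b' then lam else c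
  have entry : ∀ (d d' : G.Dart) (b b' : Bool) (e e' : E), ψ d = (b, e) → ψ d' = (b', e') →
      (lam • (1 : Matrix G.Dart G.Dart ℂ) + c • Jc G) d d'
        = Matrix.blockDiagonal (fun _ : E => MB) (b, e) (b', e') := by
    intro d d' b b' e e' hψd hψd'
    have hdd : d = d' ↔ (b = b' ∧ e = e') := by
      constructor
      · intro h
        have h2 : ((b, e) : Bool × E) = (b', e') := by rw [← hψd, ← hψd', h]
        exact ⟨congrArg Prod.fst h2, congrArg Prod.snd h2⟩
      · rintro ⟨rfl, rfl⟩
        apply ψ.injective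
        rw [hψd, hψd']
    have hsymm3 : ψ d.symm = (!b, e) := by
      have h3 : ψ d.symm = (!(ψ d).1, (ψ d).2) := hφsymm d
      rw [hψd] at h3
      exact h3
    have hsym : d' = d.symm ↔ (b' = !b ∧ e' = e) := by
      constructor
      · intro h
        have h4 : ((b', e') : Bool × E) = (!b, e) := by rw [← hψd', h, hsymm3]
        exact ⟨congrArg Prod.fst h4, congrArg Prod.snd h4⟩
      · rintro ⟨rfl, rfl⟩
        apply ψ.injective
        rw [hψd', hsymm3]
    simp only [Matrix.add_apply, Matrix.smul_apply, Matrix.one_apply, Jc,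
      Matrix.blockDiagonal_apply, smul_eq_mul, MB, Matrix.of_apply]
    rcases eq_or_ne e e' with rfl | hee
    · rw [if_pos rfl]
      rcases eq_or_ne b b' with rfl | hbb
      · have h1 : d = d' := hdd.mpr ⟨rfl, rfl⟩
        have h2 : d' ≠ d.symm := fun h => by
          rcases hsym.mp h with ⟨h3, -⟩; simp at h3
        rw [if_pos h1, if_neg h2, if_pos rfl]
        ring
      · have h1 : d ≠ d' := fun h => hbb (hdd.mp h).1
        have h2 : d' = d.symm := hsym.mpr ⟨by cases b <;> cases b' <;> simp_all, rfl⟩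
        rw [if_neg h1, if_pos h2, if_neg hbb]
        ring
    · have h1 : d ≠ d' := fun h => hee (hdd.mp h).2
      have h2 : d' ≠ d.symm := fun h => hee ((hsym.mp h).2).symm
      rw [if_neg h1, if_neg h2, if_neg (by simp [hee])]
      ring
  have key : Matrix.det (lam • (1 : Matrix G.Dart G.Dart ℂ) + c • Jc G) =
      Matrix.det (Matrix.blockDiagonal (fun _ : E => MB)) := by
    rw [← Matrix.det_reindex_self ψ (lam • (1 : Matrix G.Dart G.Dart ℂ) + c • Jc G)]
    congr 1
    ext ⟨b, e⟩ ⟨b', e'⟩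
    rw [Matrix.reindex_apply, Matrix.submatrix_apply]
    exact entry _ _ b b' e e' (ψ.apply_symm_apply _) (ψ.apply_symm_apply _)
  rw [key, Matrix.det_blockDiagonal]
  have hdet2 : Matrix.det MB = lam ^ 2 - c ^ 2 := by
    have h5 : Matrix.det (MB.submatrix finTwoEquiv finTwoEquiv) = lam ^ 2 - c ^ 2 := by
      rw [show (MB.submatrix finTwoEquiv finTwoEquiv)
        = !![lam, c; c, lam] by ext i j; fin_cases i <;> fin_cases j <;> simp [finTwoEquiv, MB]]
      rw [Matrix.det_fin_two_of]
      ring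
    rwa [Matrix.det_submatrix_equiv_self] at h5
  rw [Finset.prod_congr rfl fun e _ => hdet2, Finset.prod_const, Finset.card_univ]
  congr 1
  exact Fintype.card_coe _

section Core

variable (G : SimpleGraph V) [DecidableRel G.Adj]

lemma core_det (k : ℕ) (hreg : G.IsRegularOfDegree k) (hk : 2 ≤ k)
    (lam : ℂ) (hl : lam ^ 2 - 1 ≠ 0) :
    Matrix.det (lam • (1 : Matrix G.Dart G.Dart ℂ) - Bc G + Jc G) =
      (lam ^ 2 - 1) ^ (G.edgeFinset.card - Fintype.card V) *
        Matrix.det (lam ^ 2 • (1 : Matrix V V ℂ) - lam • G.adjMatrix ℂ +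
          ((k : ℂ) - 1) • (1 : Matrix V V ℂ)) := by
  classical
  set c := lam ^ 2 - 1 with hc
  have hc0 : c ≠ 0 := hl
  set A := G.adjMatrix ℂ with hA
  set m := G.edgeFinset.card with hm
  set n := Fintype.card V with hn
  set D := Matrix.det (lam ^ 2 • (1 : Matrix V V ℂ) - lam • A + ((k : ℂ) - 1) • 1) with hD
  have hcard : Fintype.card G.Dart = 2 * m := G.dart_card_eq_twice_card_edges
  have hnm : n ≤ m := by
    have h1 : ∑ v : V, G.degree v = 2 * m := G.sum_degrees_eq_twice_card_edges
    have h2 : ∑ v : V, G.degree v = n * k := by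
      rw [Finset.sum_congr rfl fun v _ => hreg v, Finset.sum_const, Finset.card_univ,
        smul_eq_mul, hn]
    have h3 : 2 * n ≤ n * k := by
      calc 2 * n = n * 2 := by ring
        _ ≤ n * k := Nat.mul_le_mul_left n hk
    omega
  set W := lam • Kc G - Lc G with hW
  have h1 : (lam • (1 : Matrix G.Dart G.Dart ℂ) - Bc G + Jc G) * (lam • 1 - Jc G)
      = c • 1 - (Lc G)ᵀ * W := by
    rw [← LcT_mul_Kc G, hW, hc]
    simp only [Matrix.mul_sub, Matrix.sub_mul, Matrix.add_mul, Matrix.smul_mul,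
      Matrix.mul_smul, Matrix.one_mul, Matrix.mul_one, Matrix.mul_assoc,
      Kc_mul_Jc G, Jc_mul_Jc G]
    module
  have hdetN : Matrix.det (lam • (1 : Matrix G.Dart G.Dart ℂ) - Jc G) = c ^ m := by
    have h := det_smul_one_add_smul_Jc G lam (-1)
    rw [neg_one_smul, ← sub_eq_add_neg] at h
    rw [h, hc, hm]
    norm_num
  have hXfact : c • ((1 : Matrix G.Dart G.Dart ℂ) + (-(c⁻¹ • (Lc G)ᵀ)) * W)
      = c • 1 - (Lc G)ᵀ * W := by
    rw [Matrix.neg_mul, Matrix.smul_mul, smul_add, smul_neg, smul_smul,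
      mul_inv_cancel₀ hc0, one_smul, ← sub_eq_add_neg]
  have hWL : W * (Lc G)ᵀ = lam • A - (k : ℂ) • 1 := by
    rw [hW, Matrix.sub_mul, Matrix.smul_mul, Kc_mul_LcT, Lc_mul_LcT G hreg, hA]
  have hsc : c⁻¹ • (c • (1 : Matrix V V ℂ)) = 1 := by
    rw [smul_smul, inv_mul_cancel₀ hc0, one_smul]
  have h4 : (1 : Matrix V V ℂ) + W * (-(c⁻¹ • (Lc G)ᵀ))
      = c⁻¹ • (c • 1 - lam • A + (k : ℂ) • 1) := by
    rw [Matrix.mul_neg, Matrix.mul_smul, hWL]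
    rw [show c⁻¹ • (c • (1 : Matrix V V ℂ) - lam • A + (k : ℂ) • 1)
        = c⁻¹ • (c • (1 : Matrix V V ℂ)) - c⁻¹ • (lam • A) + c⁻¹ • ((k : ℂ) • 1) by module, hsc]
    module
  have hDeq : Matrix.det (c • (1 : Matrix V V ℂ) - lam • A + (k : ℂ) • 1) = D := by
    rw [hD]
    congr 1
    rw [hc]
    module
  have main : Matrix.det (lam • (1 : Matrix G.Dart G.Dart ℂ) - Bc G + Jc G) * c ^ m
      = c ^ (2 * m) * c⁻¹ ^ n * D := by
    rw [← hdetN, ← Matrix.det_mul, h1, ← hXfact, Matrix.det_smul, hcard,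
      Matrix.det_one_add_mul_comm, h4, Matrix.det_smul, hDeq, ← hn]
    ring
  have hpow : c ^ (2 * m) * c⁻¹ ^ n = c ^ (m - n) * c ^ m := by
    have e1 : c ^ (2 * m) = c ^ (m - n) * c ^ m * c ^ n := by
      rw [← pow_add, ← pow_add]
      congr 1
      omega
    rw [e1, mul_assoc (c ^ (m - n) * c ^ m), ← mul_pow, mul_inv_cancel₀ hc0, one_pow, mul_one]
  have final : Matrix.det (lam • (1 : Matrix G.Dart G.Dart ℂ) - Bc G + Jc G) * c ^ m
      = (c ^ (m - n) * D) * c ^ m := by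
    rw [main, hpow]
    ring
  exact mul_right_cancel₀ (pow_ne_zero m hc0) final

end Core

section Pos

variable (G : SimpleGraph V) [DecidableRel G.Adj]

lemma posSupp_grover_eq' (k : ℕ) (hreg : G.IsRegularOfDegree k) (hk : 2 ≤ k) :
    (posSupp (grover G)).map (fun x : ℝ => (x : ℂ)) = (Bc G)ᵀ - Jc G := by
  ext e f
  have hkpos : (0 : ℝ) < (k : ℝ) := by
    have : 0 < k := lt_of_lt_of_le (by norm_num) hk
    exact_mod_cast this
  have hdeg : (G.degree e.toProd.1 : ℝ) = (k : ℝ) := by rw [hreg e.toProd.1]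
  simp only [Matrix.map_apply, Matrix.sub_apply, Matrix.transpose_apply, Bc, Jc]
  by_cases h1 : f = e.symm
  · have hg : grover G e f = 2 / (G.degree e.toProd.1 : ℝ) - 1 := by
      simp [grover, h1]
    have hnot : ¬ (0 < 2 / (G.degree e.toProd.1 : ℝ) - 1) := by
      rw [hdeg]
      have h2k : (2 : ℝ) ≤ (k : ℝ) := by exact_mod_cast hk
      have : (2 : ℝ) / (k : ℝ) ≤ 1 := (div_le_one hkpos).mpr h2k
      linarith
    have hp : posSupp (grover G) e f = 0 := by
      unfold posSupp
      simp only [hg]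
      rw [if_neg hnot]
    have hf2 : f.toProd.2 = e.toProd.1 := by rw [h1]; simp
    rw [hp, if_pos hf2, if_pos h1]
    norm_num
  · by_cases h2 : f.toProd.2 = e.toProd.1
    · have hg : grover G e f = 2 / (G.degree e.toProd.1 : ℝ) := by
        simp [grover, h1, h2]
      have hpos : 0 < 2 / (G.degree e.toProd.1 : ℝ) := by
        rw [hdeg]; positivity
      have hp : posSupp (grover G) e f = 1 := by
        unfold posSupp
        simp only [hg]
        rw [if_pos hpos]
      rw [hp, if_pos h2, if_neg h1]
      norm_num
    · have hg : grover G e f = 0 := by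
        simp [grover, h1, h2]
      have hp : posSupp (grover G) e f = 0 := by
        unfold posSupp
        simp only [hg]
        norm_num
      rw [hp, if_neg h2, if_neg h1]
      norm_num

end Pos

/-- Emms–Hancock–Severini–Wilson:  for a connected `k`-regular graph with
`k ≥ 2`, `det(λ I_{2m} - U⁺) = (λ² - 1)^{m-n} det(λ² I_n - λ A + (k-1) I_n)`. -/
theorem charpoly_posSupp_grover (G : SimpleGraph V) [DecidableRel G.Adj] (k : ℕ)
    (hconn : G.Connected) (hreg : G.IsRegularOfDegree k) (hk : 2 ≤ k) (lam : ℂ) :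
    Matrix.det (lam • (1 : Matrix G.Dart G.Dart ℂ) -
        (posSupp (grover G)).map (fun x : ℝ => (x : ℂ))) =
      (lam ^ 2 - 1) ^ (G.edgeFinset.card - Fintype.card V) *
        Matrix.det (lam ^ 2 • (1 : Matrix V V ℂ) - lam • G.adjMatrix ℂ +
          ((k : ℂ) - 1) • (1 : Matrix V V ℂ)) := by
  classical
  rw [posSupp_grover_eq' G k hreg hk]
  have hTfix : lam • (1 : Matrix G.Dart G.Dart ℂ) - ((Bc G)ᵀ - Jc G)
      = (lam • (1 : Matrix G.Dart G.Dart ℂ) - Bc G + Jc G)ᵀ := by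
    have h := congrArg Matrix.transpose
      (show (lam • (1 : Matrix G.Dart G.Dart ℂ) - Bc G + Jc G)ᵀ
          = lam • 1 - (Bc G)ᵀ + Jc G by
        rw [Matrix.transpose_add, Matrix.transpose_sub, Matrix.transpose_smul,
          Matrix.transpose_one, Jc_transpose])
    rw [Matrix.transpose_add, Matrix.transpose_sub, Matrix.transpose_smul,
      Matrix.transpose_one, Jc_transpose]
    abel
  rw [hTfix, Matrix.det_transpose]
  set f : ℂ → ℂ := fun l =>
    Matrix.det (l • (1 : Matrix G.Dart G.Dart ℂ) - Bc G + Jc G) with hf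
  set g : ℂ → ℂ := fun l =>
    (l ^ 2 - 1) ^ (G.edgeFinset.card - Fintype.card V) *
      Matrix.det (l ^ 2 • (1 : Matrix V V ℂ) - l • G.adjMatrix ℂ +
        ((k : ℂ) - 1) • (1 : Matrix V V ℂ)) with hg
  have hfc : Continuous f := by
    apply Continuous.matrix_det
    exact ((continuous_id.smul continuous_const).sub continuous_const).add continuous_const
  have hgc : Continuous g := by
    apply Continuous.mul
    · exact Continuous.pow ((continuous_pow 2).sub continuous_const) _
    · apply Continuous.matrix_det
      exact (((continuous_pow 2).smul continuous_const).sub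
        (continuous_id.smul continuous_const)).add continuous_const
  have heq : Set.EqOn f g {x : ℂ | x ^ 2 - 1 ≠ 0} := fun x hx =>
    core_det G k hreg hk x hx
  have hdense : Dense {x : ℂ | x ^ 2 - 1 ≠ 0} := by
    have h1 : (({(1 : ℂ)}ᶜ ∩ {(-1 : ℂ)}ᶜ) : Set ℂ) ⊆ {x | x ^ 2 - 1 ≠ 0} := by
      rintro x ⟨hx1, hx2⟩ hx
      simp only [Set.mem_compl_iff, Set.mem_singleton_iff] at hx1 hx2
      have hfac : (x - 1) * (x + 1) = 0 := by linear_combination hx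
      rcases mul_eq_zero.mp hfac with h | h
      · exact hx1 (sub_eq_zero.mp h)
      · exact hx2 (eq_neg_of_add_eq_zero_left h)
    exact Dense.mono h1 ((dense_compl_singleton (1 : ℂ)).inter_of_isOpen_left
      (dense_compl_singleton (-1 : ℂ)) isOpen_compl_singleton)
  have hfg : f = g := Continuous.ext_on hdense hfc hgc heq
  exact congrFun hfg lam
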